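/- Let H be a connected k-uniform hypergraph with at least two vertices, and let u, v be two distinct vertices. Then the smallest signless Laplacian eigenvalue satisfies q_min(H) ≤ (d_u + d_v)/2. -/

import Mathlib

open Finset

/-- The set of hyperedges containing both `i` and `j`. -/
def edgesBetween {n : ℕ} (E : Finset (Finset (Fin n))) (i j : Fin n) :
    Finset (Finset (Fin n)) :=
  E.filter fun e => i ∈ e ∧ j ∈ e

/-- The degree of vertex `i`: the number of hyperedges containing `i`. -/
def hdeg {n : ℕ} (E : Finset (Finset (Fin n))) (i : Fin n) : ℕ :=
  (E.filter fun e => i ∈ e).card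

/-- Two (distinct) vertices are adjacent if some hyperedge contains both. -/
def Adj {n : ℕ} (E : Finset (Finset (Fin n))) (i j : Fin n) : Prop :=
  i ≠ j ∧ ∃ e ∈ E, i ∈ e ∧ j ∈ e

/-- The neighbours of a vertex. -/
noncomputable def neighbors {n : ℕ} (E : Finset (Finset (Fin n))) (i : Fin n) :
    Finset (Fin n) :=
  @Finset.filter _ (fun j => Adj E i j) (Classical.decPred _) Finset.univ

/-- Banerjee's adjacency matrix of a hypergraph: `A i j = ∑_{e ∋ i,j} 1/(|e|-1)`. -/
noncomputable def adjMat {n : ℕ} (E : Finset (Finset (Fin n))) :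
    Matrix (Fin n) (Fin n) ℝ :=
  Matrix.of fun i j =>
    if i = j then 0 else ∑ e ∈ edgesBetween E i j, 1 / ((e.card : ℝ) - 1)

/-- The signless Laplacian matrix `Q = D + A`. -/
noncomputable def signlessLap {n : ℕ} (E : Finset (Finset (Fin n))) :
    Matrix (Fin n) (Fin n) ℝ :=
  Matrix.diagonal (fun i => (hdeg E i : ℝ)) + adjMat E

/-- Largest eigenvalue of a real matrix. -/
noncomputable def qmax {n : ℕ} (M : Matrix (Fin n) (Fin n) ℝ) : ℝ :=
  sSup (spectrum ℝ M)

/-- Smallest eigenvalue of a real matrix. -/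
noncomputable def qmin {n : ℕ} (M : Matrix (Fin n) (Fin n) ℝ) : ℝ :=
  sInf (spectrum ℝ M)

/-- A hypergraph is `k`-uniform if every hyperedge has exactly `k` vertices. -/
def IsUniform {n : ℕ} (k : ℕ) (E : Finset (Finset (Fin n))) : Prop :=
  ∀ e ∈ E, e.card = k

/-- A hypergraph is connected if any two vertices are joined by a walk. -/
def Conn {n : ℕ} (E : Finset (Finset (Fin n))) : Prop :=
  ∀ i j : Fin n, Relation.ReflTransGen (Adj E) i j

open Matrix

lemma signlessLap_isHermitian {n : ℕ} (E : Finset (Finset (Fin n))) :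
    (signlessLap E).IsHermitian := by
  ext i j
  simp only [signlessLap, adjMat, Matrix.conjTranspose_apply, Matrix.add_apply,
    Matrix.diagonal_apply, Matrix.of_apply, star_trivial]
  by_cases h : i = j
  · subst h; simp
  · have h' : ¬ j = i := fun hh => h hh.symm
    simp only [h, h', if_neg, if_false]
    unfold edgesBetween
    rw [show (E.filter fun e => j ∈ e ∧ i ∈ e) = (E.filter fun e => i ∈ e ∧ j ∈ e) from
      Finset.filter_congr fun e _ => by tauto]

lemma rayleigh_min {m : ℕ} {Q : Matrix (Fin m) (Fin m) ℝ} (hQ : Q.IsHermitian)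
    (μ : ℝ) (hμ : ∀ j, μ ≤ hQ.eigenvalues j) (x : Fin m → ℝ) :
    μ * (x ⬝ᵥ x) ≤ x ⬝ᵥ (Q *ᵥ x) := by
  set U : Matrix (Fin m) (Fin m) ℝ := (hQ.eigenvectorUnitary : Matrix (Fin m) (Fin m) ℝ) with hUdef
  have hstar : star U = Uᵀ := by
    ext i j; simp [Matrix.conjTranspose_apply]
  have hUU : U * Uᵀ = 1 := by
    rw [← hstar]; exact (Matrix.mem_unitaryGroup_iff).mp hQ.eigenvectorUnitary.2
  set y : Fin m → ℝ := Uᵀ *ᵥ x with hy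
  have hyy : y ⬝ᵥ y = x ⬝ᵥ x := by
    rw [hy, Matrix.dotProduct_mulVec, Matrix.vecMul_transpose, Matrix.mulVec_mulVec, hUU,
      Matrix.one_mulVec]
  have hxQx : x ⬝ᵥ (Q *ᵥ x) = ∑ j, hQ.eigenvalues j * (y j * y j) := by
    conv_lhs => rw [hQ.spectral_theorem]
    rw [Unitary.conjStarAlgAut_apply]
    rw [← hUdef, ← Matrix.mulVec_mulVec, ← Matrix.mulVec_mulVec, Matrix.dotProduct_mulVec,
      ← Matrix.mulVec_transpose, hstar]
    simp [Matrix.mulVec_diagonal, dotProduct, mul_comm, mul_left_comm,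
      RCLike.ofReal_real_eq_id]
    rfl
  rw [hxQx, ← hyy]
  have h2 : μ * (y ⬝ᵥ y) = ∑ j, μ * (y j * y j) := by
    simp [dotProduct, Finset.mul_sum]
  rw [h2]
  exact Finset.sum_le_sum fun j _ =>
    mul_le_mul_of_nonneg_right (hμ j) (mul_self_nonneg _)

theorem stmt_10 (n k : ℕ) (hn : 2 ≤ n) (hk : 2 ≤ k) (E : Finset (Finset (Fin n)))
    (hU : IsUniform k E) (hc : Conn E) (u v : Fin n) (huv : u ≠ v) :
    qmin (signlessLap E) ≤ ((hdeg E u : ℝ) + (hdeg E v : ℝ)) / 2 := by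
  have hQ := signlessLap_isHermitian E
  set Q := signlessLap E with hQdef
  have hne : Nonempty (Fin n) := ⟨⟨0, by omega⟩⟩
  obtain ⟨i₀, -, hmin⟩ := Finset.exists_min_image Finset.univ hQ.eigenvalues
    Finset.univ_nonempty
  have h1 : qmin Q ≤ hQ.eigenvalues i₀ :=
    csInf_le (Matrix.finite_spectrum Q).bddBelow (hQ.eigenvalues_mem_spectrum_real i₀)
  set x : Fin n → ℝ := Pi.single u 1 - Pi.single v 1 with hx
  have hvu : ¬ v = u := fun h => huv h.symm
  have hxx : x ⬝ᵥ x = 2 := by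
    simp [hx, dotProduct, Pi.single_apply, sub_mul, mul_sub,
      Finset.sum_sub_distrib, huv, hvu]
    norm_num
  have hray := rayleigh_min hQ (hQ.eigenvalues i₀) (fun j => hmin j (Finset.mem_univ j)) x
  rw [hxx] at hray
  -- compute the quadratic form
  have hQx : x ⬝ᵥ (Q *ᵥ x) = Q u u + Q v v - Q u v - Q v u := by
    rw [hx]
    simp [Matrix.mulVec_sub, Matrix.mulVec_single, sub_dotProduct,
      dotProduct_sub, single_dotProduct]
    ring
  have hAnonneg : ∀ i j : Fin n, i ≠ j → 0 ≤ adjMat E i j := by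
    intro i j hij
    simp only [adjMat, Matrix.of_apply, hij, if_neg, if_false]
    apply Finset.sum_nonneg
    intro e he
    have heE : e ∈ E := (Finset.mem_filter.mp he).1
    have hcard : e.card = k := hU e heE
    have h2 : (2:ℝ) ≤ (e.card : ℝ) := by rw [hcard]; exact_mod_cast hk
    have h3 : (0:ℝ) < (e.card : ℝ) - 1 := by linarith
    positivity
  have hdiag : ∀ i, Q i i = hdeg E i := by
    intro i
    simp [hQdef, signlessLap, Matrix.add_apply, Matrix.diagonal_apply_eq, adjMat]
  have hoff : ∀ i j, i ≠ j → Q i j = adjMat E i j := by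
    intro i j hij
    simp [hQdef, signlessLap, Matrix.add_apply, Matrix.diagonal_apply_ne _ hij]
  rw [hQx, hdiag u, hdiag v, hoff u v huv, hoff v u (fun h => huv h.symm)] at hray
  have h4 := hAnonneg u v huv
  have h5 := hAnonneg v u (fun h => huv h.symm)
  linarith
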